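/- Let φ be the morphism 0→001, 1→01, let φ^ω(0) be its unique infinite fixed point beginning with 0, let g be the morphism 0→01, 1→11, and let w = g(φ^ω(0)). Then w contains no antisquare factor other than 01 and 10, and the critical exponent of w equals 2 + α, where α = (1+√5)/2 is the golden ratio. -/

import Mathlib

/-- Bitwise complement of a binary word. -/
def comp (x : List Bool) : List Bool := x.map (fun b => !b)

/-- An antisquare is a nonempty word of the form `y ++ comp y`. -/
def Antisquare (x : List Bool) : Prop := ∃ y : List Bool, y ≠ [] ∧ x = y ++ comp y

/-- `w` has period `p ≥ 1` if `w[i] = w[i+p]` whenever both indices are valid. -/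
def HasPeriod (w : List Bool) (p : ℕ) : Prop :=
  1 ≤ p ∧ ∀ i, i + p < w.length → w.getD i false = w.getD (i + p) false

/-- The exponent of a finite word: its length divided by its least period. -/
noncomputable def exponent (w : List Bool) : ℝ :=
  (w.length : ℝ) / ((sInf {p : ℕ | HasPeriod w p} : ℕ) : ℝ)

/-- `u` is a factor of the right-infinite word `w : ℕ → Bool`. -/
def FactorInf (u : List Bool) (w : ℕ → Bool) : Prop :=
  ∃ i : ℕ, u = (List.range u.length).map (fun t => w (i + t))

/-- `u` is a factor of the bi-infinite word `w : ℤ → Bool`. -/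
def FactorBi (u : List Bool) (w : ℤ → Bool) : Prop :=
  ∃ i : ℤ, u = (List.range u.length).map (fun t => w (i + (t : ℤ)))

/-- A binary word is good if its only antisquare factors are `01` and `10`. -/
def Good (w : List Bool) : Prop :=
  ∀ u, u <:+: w → Antisquare u → u = [false, true] ∨ u = [true, false]

/-- Apply a morphism (given on letters) to a word. -/
def applyM (m : Bool → List Bool) (w : List Bool) : List Bool := (w.map m).flatten

/-- The morphism φ: 0 → 001, 1 → 01. -/
def phiM : Bool → List Bool := fun b => if b then [false, true] else [false, false, true]

/-- The morphism g: 0 → 01, 1 → 11. -/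
def gM : Bool → List Bool := fun b => if b then [true, true] else [false, true]

/-- Iterates of φ starting from 0; their limit is the fixed point φ^ω(0). -/
def phiIter : ℕ → List Bool
  | 0 => [false]
  | n + 1 => applyM phiM (phiIter n)

/-- The factors of the infinite word w = g(φ^ω(0)): since each `phiIter n` is a
prefix of `φ^ω(0)`, these are exactly the factors of some `g(φ^n(0))`. -/
def WFactor (u : List Bool) : Prop := ∃ n, u <:+: applyM gM (phiIter n)

noncomputable section
open Real

def ga : ℝ := (1 + Real.sqrt 5)/2
def bt : ℝ := 2 - ga
def et (k : ℕ) : ℝ := (ga - 1)^k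
def zf (j : ℕ) : ℝ := Int.fract ((j:ℝ) * bt)
def dZ (x : ℝ) : ℝ := |x - round x|

lemma sqrt5_sq : Real.sqrt 5 ^ 2 = 5 := Real.sq_sqrt (by norm_num)
lemma sqrt5_lb : (2.23:ℝ) < Real.sqrt 5 := by
  nlinarith [sqrt5_sq, Real.sqrt_nonneg 5]
lemma sqrt5_ub : Real.sqrt 5 < 2.24 := by
  nlinarith [sqrt5_sq, Real.sqrt_nonneg 5]
lemma ga_lb : (1.615:ℝ) < ga := by unfold ga; linarith [sqrt5_lb]
lemma ga_ub : ga < 1.62 := by unfold ga; linarith [sqrt5_ub]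
lemma ga_sq : ga^2 = ga + 1 := by
  unfold ga; field_simp; nlinarith [sqrt5_sq]
lemma bt_pos : 0 < bt := by unfold bt; linarith [ga_ub]
lemma bt_lt : bt < 1/2 := by unfold bt; linarith [ga_lb]
lemma irr_ga : Irrational ga := by
  have h5 : Irrational (Real.sqrt 5) := Nat.Prime.irrational_sqrt (by norm_num)
  have : ga = (Real.sqrt 5) / 2 + 1/2 := by unfold ga; ring
  rw [this]
  have h2 : Irrational (√5 / 2) := by
    have := h5.div_intCast (m := 2) (by norm_num)
    simpa using this
  have h3 := h2.add_ratCast (q := 1/2)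
  convert h3 using 2
  push_cast; ring

lemma et_pos (k : ℕ) : 0 < et k := pow_pos (by unfold ga; linarith [sqrt5_lb]) k
lemma et_rec (k : ℕ) : et k = et (k+1) + et (k+2) := by
  unfold et
  have : (ga-1)^(k+1) + (ga-1)^(k+2) = (ga-1)^k * ((ga-1) + (ga-1)^2) := by ring
  rw [this]
  have h2 : (ga-1) + (ga-1)^2 = 1 := by nlinarith [ga_sq]
  rw [h2, mul_one]
lemma et_succ_lt (k : ℕ) : et (k+1) < et k := by
  have := et_pos (k+2); have := et_rec k; linarith
lemma et_anti {k l : ℕ} (h : k ≤ l) : et l ≤ et k := by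
  induction l with
  | zero => simp at h; simp [h]
  | succ n ih =>
    rcases Nat.lt_or_ge k (n+1) with h'|h'
    · exact le_trans (le_of_lt (et_succ_lt n)) (ih (Nat.lt_succ_iff.mp h'))
    · have : k = n+1 := le_antisymm h h'
      simp [this]
lemma et2 : et 2 = bt := by unfold et bt; nlinarith [ga_sq]
lemma et1 : et 1 = ga - 1 := by unfold et; ring
lemma et_le_bt {k : ℕ} (h : 2 ≤ k) : et k ≤ bt := et2 ▸ et_anti h
lemma et3 : et 3 = 2*ga - 3 := by
  unfold et; have := ga_sq; nlinarith [ga_sq]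
lemma et3_lt_half : et 3 < 1/2 := by rw [et3]; linarith [ga_ub]
lemma et_lt_one {k : ℕ} (h : 1 ≤ k) : et k < 1 := by
  calc et k ≤ et 1 := et_anti h
  _ < 1 := by rw [et1]; linarith [ga_ub]

lemma fib_ga (k : ℕ) : (Nat.fib k : ℝ) * ga - Nat.fib (k+1) = -(1-ga)^k := by
  induction k with
  | zero => simp
  | succ n ih =>
    have hf : (Nat.fib (n+2) : ℝ) = Nat.fib n + Nat.fib (n+1) := by
      rw [Nat.fib_add_two]; push_cast; ring
    have hg : (1-ga)^(n+1) = (1-ga)^n * (1-ga) := by ring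
    have : (Nat.fib (n+1):ℝ) * ga - (Nat.fib n + Nat.fib (n+1)) = -((1-ga)^n * (1-ga)) := by
      have expand : -((1-ga)^n * (1-ga)) = (1-ga) * (-(1-ga)^n) := by ring
      rw [expand, ← ih]
      have : (1-ga) * ((Nat.fib n:ℝ) * ga - Nat.fib (n+1)) =
          (Nat.fib n:ℝ)*ga - (Nat.fib n:ℝ)*ga^2 - (Nat.fib (n+1):ℝ) + (Nat.fib (n+1):ℝ)*ga := by ring
      rw [this, ga_sq]; ring
    rw [hf, hg]; linarith [this]

lemma one_sub_ga_pow_even {k : ℕ} (h : Even k) : (1-ga)^k = et k := by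
  unfold et; rw [show (1-ga) = -(ga-1) by ring, (Even.neg_pow h)]
lemma one_sub_ga_pow_odd {k : ℕ} (h : Odd k) : (1-ga)^k = -et k := by
  unfold et; rw [show (1-ga) = -(ga-1) by ring, (Odd.neg_pow h)]

-- fract helpers
lemma fr01 {x : ℝ} (h0 : 0 ≤ x) (h1 : x < 1) : Int.fract x = x := Int.fract_eq_self.mpr ⟨h0, h1⟩
lemma fr12 {x : ℝ} (h0 : 1 ≤ x) (h1 : x < 2) : Int.fract x = x - 1 := by
  have : Int.fract x = Int.fract (x - 1 + (1:ℤ)) := by norm_num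
  rw [this, Int.fract_add_intCast, fr01 (by linarith) (by linarith)]
lemma fr_neg {x : ℝ} (h0 : 0 < x) (h1 : x < 1) : Int.fract (-x) = 1 - x := by
  have : Int.fract (-x) = Int.fract (-x + (1:ℤ)) := by norm_num
  rw [this]
  push_cast
  rw [show -x + 1 = 1 - x by ring, fr01 (by linarith) (by linarith)]

lemma zf_nonneg (j : ℕ) : 0 ≤ zf j := Int.fract_nonneg _
lemma zf_lt_one (j : ℕ) : zf j < 1 := Int.fract_lt_one _
lemma zf_zero : zf 0 = 0 := by unfold zf; norm_num
lemma zf_add (j t : ℕ) : zf (j + t) = Int.fract (zf j + zf t) := by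
  unfold zf
  rw [Int.fract_eq_fract]
  refine ⟨⌊(j:ℝ)*bt⌋ + ⌊(t:ℝ)*bt⌋, ?_⟩
  have h1 := Int.self_sub_fract ((j:ℝ)*bt)
  have h2 := Int.self_sub_fract ((t:ℝ)*bt)
  push_cast
  push_cast at h1 h2
  nlinarith [h1, h2]
lemma zf_one : zf 1 = bt := by
  unfold zf; push_cast; rw [one_mul, fr01 (le_of_lt bt_pos) (by linarith [bt_lt])]

lemma fib_bt (k : ℕ) : (Nat.fib k : ℝ) * bt = ((2*Nat.fib k - Nat.fib (k+1) : ℤ) : ℝ) + (1-ga)^k := by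
  have := fib_ga k
  push_cast
  unfold bt
  nlinarith [this]

lemma zf_fib_even {k : ℕ} (h2 : 2 ≤ k) (he : Even k) : zf (Nat.fib k) = et k := by
  unfold zf
  rw [fib_bt k, add_comm, Int.fract_add_intCast, one_sub_ga_pow_even he,
    fr01 (le_of_lt (et_pos k)) (et_lt_one (by omega))]
lemma zf_fib_odd {k : ℕ} (ho : Odd k) : zf (Nat.fib k) = 1 - et k := by
  have h1 : 1 ≤ k := ho.pos
  unfold zf
  rw [fib_bt k, add_comm, Int.fract_add_intCast, one_sub_ga_pow_odd ho,
    fr_neg (et_pos k) (et_lt_one h1)]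

-- dZ lemmas
lemma dZ_eq_min (x : ℝ) : dZ x = min (Int.fract x) (1 - Int.fract x) := by
  unfold dZ; rw [abs_sub_round_eq_min]
lemma dZ_nonneg (x : ℝ) : 0 ≤ dZ x := abs_nonneg _
lemma dZ_le_abs (x : ℝ) (m : ℤ) : dZ x ≤ |x - m| := by
  rw [dZ_eq_min]
  rcases le_or_gt (m:ℝ) ⌊x⌋ with h|h
  · have : Int.fract x ≤ x - m := by
      have hf := Int.self_sub_fract x
      linarith
    calc min (Int.fract x) (1 - Int.fract x) ≤ Int.fract x := min_le_left _ _
    _ ≤ x - m := this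
    _ ≤ |x - m| := le_abs_self _
  · have hm : (⌊x⌋:ℝ) + 1 ≤ m := by exact_mod_cast Int.add_one_le_iff.mpr (by exact_mod_cast h)
    have : 1 - Int.fract x ≤ m - x := by
      have hf := Int.self_sub_fract x
      nlinarith
    calc min (Int.fract x) (1 - Int.fract x) ≤ 1 - Int.fract x := min_le_right _ _
    _ ≤ m - x := this
    _ ≤ |x - m| := by rw [abs_sub_comm]; exact le_abs_self _
lemma dZ_eq_of {x : ℝ} {m : ℤ} (h : |x - m| < 1/2) : dZ x = |x - m| := by
  have h1 : dZ x ≤ |x - m| := dZ_le_abs x m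
  have h2 : |(round x : ℝ) - m| < 1 := by
    have : |(round x:ℝ) - x| = dZ x := by rw [← abs_neg]; unfold dZ; ring_nf
    calc |(round x:ℝ) - m| ≤ |(round x:ℝ) - x| + |x - m| := abs_sub_le _ _ _
    _ < 1 := by rw [this]; linarith
  have h3 : round x = m := by
    have h4 : |round x - m| < 1 := by exact_mod_cast (by push_cast; exact h2 : |((round x - m : ℤ):ℝ)| < 1)
    rw [abs_lt] at h4
    omega
  unfold dZ; rw [h3]
lemma dZ_sub_le (x y : ℝ) : dZ x - dZ y ≤ dZ (x + y) := by
  have h := dZ_le_abs x (round (x+y) - round y)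
  have h2 : |x - ((round (x+y) - round y : ℤ) : ℝ)| ≤ dZ (x+y) + dZ y := by
    have e : x - ((round (x+y) - round y : ℤ):ℝ) = ((x+y) - round (x+y)) - (y - round y) := by
      push_cast; ring
    rw [e]
    exact abs_sub _ _
  linarith
lemma dZ_add_le (x y : ℝ) : dZ (x + y) ≤ dZ x + dZ y := by
  have h := dZ_le_abs (x+y) (round x + round y)
  have : |x + y - ((round x : ℤ) + round y : ℤ)| ≤ dZ x + dZ y := by
    push_cast
    have e : x + y - ((round x:ℝ) + round y) = (x - round x) + (y - round y) := by ring
    rw [e]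
    exact abs_add_le _ _
  linarith
lemma dZ_fib_ga {k : ℕ} (h : 2 ≤ k) : dZ ((Nat.fib k : ℝ) * ga) = et k := by
  have hid := fib_ga k
  have habs : |(Nat.fib k:ℝ)*ga - Nat.fib (k+1)| = et k := by
    rw [hid]
    rw [abs_neg, abs_pow]
    unfold et
    congr 1
    rw [abs_of_nonpos (by linarith [ga_lb])]
    ring
  have := dZ_eq_of (m := Nat.fib (k+1)) (by rw [show ((Nat.fib (k+1):ℤ):ℝ) = ((Nat.fib (k+1):ℕ):ℝ) by push_cast; ring, habs]; calc et k ≤ et 2 := et_anti h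
                                             _ < 1/2 := by rw [et2]; exact bt_lt)
  rw [this, show ((Nat.fib (k+1):ℤ):ℝ) = ((Nat.fib (k+1):ℕ):ℝ) by push_cast; ring, habs]

lemma BA : ∀ m : ℕ, ∀ q : ℕ, 1 ≤ q → q < Nat.fib (m+1) → et m ≤ dZ ((q:ℝ)*ga) := by
  intro m
  induction m using Nat.strong_induction_on with
  | _ m IH =>
    match m with
    | 0 => intro q h1 h2; simp [Nat.fib] at h2; omega
    | 1 => intro q h1 h2; simp [Nat.fib] at h2; omega
    | 2 =>
      intro q h1 h2
      have : q = 1 := by simp [Nat.fib] at h2; omega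
      subst this
      have habs : |((1:ℕ):ℝ)*ga - ((2:ℤ):ℝ)| = bt := by
        push_cast; rw [one_mul, abs_of_nonpos (by linarith [ga_ub])]; unfold bt; ring
      rw [dZ_eq_of (by rw [habs]; exact bt_lt), habs, et2]
    | (k+3) =>
      intro q h1 h2
      rcases Nat.lt_trichotomy q (Nat.fib (k+3)) with hlt|heq|hgt
      · calc et (k+3) ≤ et (k+2) := et_anti (by omega)
        _ ≤ dZ ((q:ℝ)*ga) := IH (k+2) (by omega) q h1 hlt
      · subst heq; rw [dZ_fib_ga (by omega)]
      · set r := q - Nat.fib (k+3) with hr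
        have hr1 : 1 ≤ r := by omega
        have hfibsum : Nat.fib (k+4) = Nat.fib (k+2) + Nat.fib (k+3) := Nat.fib_add_two
        have h2' : q < Nat.fib (k+4) := h2
        have hr2 : r < Nat.fib (k+2) := by omega
        have hsplit : ((q:ℝ)) * ga = (r:ℝ)*ga + (Nat.fib (k+3):ℝ)*ga := by
          have : (q:ℝ) = (r:ℝ) + (Nat.fib (k+3):ℝ) := by
            have : q = r + Nat.fib (k+3) := by omega
            exact_mod_cast congrArg (Nat.cast : ℕ → ℝ) this
          rw [this]; ring
        have h3 := dZ_sub_le ((r:ℝ)*ga) ((Nat.fib (k+3):ℝ)*ga)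
        rw [← hsplit] at h3
        have h4 : et (k+1) ≤ dZ ((r:ℝ)*ga) := IH (k+1) (by omega) r hr1 hr2
        have h5 : dZ ((Nat.fib (k+3):ℝ)*ga) = et (k+3) := dZ_fib_ga (by omega)
        have h6 := et_rec (k+1)
        have h7 := et_succ_lt (k+2)
        linarith

lemma exists_et_le {x : ℝ} (hx : 0 < x) : ∃ m, et m ≤ x := by
  obtain ⟨n, hn⟩ := exists_pow_lt_of_lt_one hx (show ga - 1 < 1 by linarith [ga_ub])
  exact ⟨n, le_of_lt hn⟩

lemma ret0 {m : ℕ} (hm : 2 ≤ m) (j : ℕ) (h : zf j < et m) :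
    ∃ t, 1 ≤ t ∧ t ≤ Nat.fib (m+2) ∧ zf (j+t) < et m := by
  have hz0 := zf_nonneg j
  have hz1 := zf_lt_one j
  have hrec := et_rec m
  have hetm1 : 1 ≤ m + 1 := by omega
  have hfib1 : 1 ≤ Nat.fib (m+1) := Nat.fib_pos.mpr (by omega)
  have hfible : Nat.fib (m+1) ≤ Nat.fib (m+2) := Nat.fib_le_fib_succ
  have hetlt1 : et m < 1 := et_lt_one (by omega)
  rcases Nat.even_or_odd m with he|ho
  · rcases le_or_gt (et (m+1)) (zf j) with hc|hc
    · refine ⟨Nat.fib (m+1), hfib1, hfible, ?_⟩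
      rw [zf_add, zf_fib_odd (by simpa using he.add_one), fr12 (by linarith) (by linarith [et_pos (m+1)])]
      linarith [et_pos (m+1)]
    · refine ⟨Nat.fib (m+2), Nat.fib_pos.mpr (by omega), le_refl _, ?_⟩
      rw [zf_add, zf_fib_even (by omega) (by rcases he with ⟨k1,hk1⟩; exact ⟨k1+1, by omega⟩),
        fr01 (by linarith [et_pos (m+2)]) (by linarith)]
      linarith
  · rcases le_or_gt (et (m+2)) (zf j) with hc|hc
    · refine ⟨Nat.fib (m+2), Nat.fib_pos.mpr (by omega), le_refl _, ?_⟩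
      rw [zf_add, zf_fib_odd (by rcases ho with ⟨k0,hk0⟩; exact ⟨k0+1, by omega⟩), fr12 (by linarith) (by linarith [et_pos (m+2)])]
      linarith [et_pos (m+2)]
    · refine ⟨Nat.fib (m+1), hfib1, hfible, ?_⟩
      rw [zf_add, zf_fib_even (by omega) (ho.add_one),
        fr01 (by linarith [et_pos (m+1)]) (by linarith)]
      linarith

lemma ret1 {m : ℕ} (hm : 2 ≤ m) (j : ℕ) (h : 1 - et m ≤ zf j) :
    ∃ t, 1 ≤ t ∧ t ≤ Nat.fib (m+2) ∧ 1 - et m ≤ zf (j+t) := by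
  have hz0 := zf_nonneg j
  have hz1 := zf_lt_one j
  have hrec := et_rec m
  have hfib1 : 1 ≤ Nat.fib (m+1) := Nat.fib_pos.mpr (by omega)
  have hfible : Nat.fib (m+1) ≤ Nat.fib (m+2) := Nat.fib_le_fib_succ
  have hetlt1 : et m < 1 := et_lt_one (by omega)
  have hp1 := et_pos (m+1)
  have hp2 := et_pos (m+2)
  rcases Nat.even_or_odd m with he|ho
  · rcases lt_or_ge (zf j + et (m+2)) 1 with hc|hc
    · refine ⟨Nat.fib (m+2), Nat.fib_pos.mpr (by omega), le_refl _, ?_⟩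
      rw [zf_add, zf_fib_even (by omega) (by rcases he with ⟨k1,hk1⟩; exact ⟨k1+1, by omega⟩),
        fr01 (by linarith) hc]
      linarith
    · refine ⟨Nat.fib (m+1), hfib1, hfible, ?_⟩
      rw [zf_add, zf_fib_odd (by simpa using he.add_one), fr12 (by linarith) (by linarith)]
      linarith
  · rcases lt_or_ge (zf j + et (m+1)) 1 with hc|hc
    · refine ⟨Nat.fib (m+1), hfib1, hfible, ?_⟩
      rw [zf_add, zf_fib_even (by omega) (ho.add_one), fr01 (by linarith) hc]
      linarith
    · refine ⟨Nat.fib (m+2), Nat.fib_pos.mpr (by omega), le_refl _, ?_⟩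
      rw [zf_add, zf_fib_odd (by rcases ho with ⟨k0,hk0⟩; exact ⟨k0+1, by omega⟩), fr12 (by linarith) (by linarith)]
      linarith

lemma hit0 {m : ℕ} (hm : 2 ≤ m) : ∀ i : ℕ, ∃ j, i ≤ j ∧ j ≤ i + Nat.fib (m+2) ∧ zf j < et m := by
  intro i
  induction i with
  | zero => exact ⟨0, le_refl _, by omega, by rw [zf_zero]; exact et_pos m⟩
  | succ n ihn =>
    obtain ⟨j, hj1, hj2, hj3⟩ := ihn
    rcases Nat.lt_or_ge j (n+1) with h|h
    · have hjn : j = n := by omega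
      subst hjn
      obtain ⟨t, ht1, ht2, ht3⟩ := ret0 hm j hj3
      exact ⟨j + t, by omega, by omega, ht3⟩
    · exact ⟨j, h, by omega, hj3⟩

lemma hit1 {m : ℕ} (hm : 2 ≤ m) : ∀ i : ℕ, ∃ j, i ≤ j ∧ j ≤ i + Nat.fib (m+2) ∧ 1 - et m ≤ zf j := by
  intro i
  induction i with
  | zero =>
    rcases Nat.even_or_odd m with he|ho
    · refine ⟨Nat.fib (m+1), by omega, by simpa using Nat.fib_le_fib_succ, ?_⟩
      rw [zf_fib_odd (by simpa using he.add_one)]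
      linarith [et_succ_lt m]
    · refine ⟨Nat.fib m, by omega, by simp; calc Nat.fib m ≤ Nat.fib (m+1) := Nat.fib_le_fib_succ
                                                _ ≤ Nat.fib (m+2) := Nat.fib_le_fib_succ, ?_⟩
      rw [zf_fib_odd ho]
  | succ n ihn =>
    obtain ⟨j, hj1, hj2, hj3⟩ := ihn
    rcases Nat.lt_or_ge j (n+1) with h|h
    · have hjn : j = n := by omega
      subst hjn
      obtain ⟨t, ht1, ht2, ht3⟩ := ret1 hm j hj3
      exact ⟨j + t, by omega, by omega, ht3⟩
    · exact ⟨j, h, by omega, hj3⟩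

lemma irr_bt : Irrational bt := by
  have := irr_ga.intCast_sub 2
  simpa [bt] using this

lemma zq_pos {q : ℕ} (hq : 1 ≤ q) : 0 < Int.fract ((q:ℝ)*bt) := by
  rw [Int.fract_pos]
  have h : Irrational ((q:ℝ)*bt) := Irrational.natCast_mul irr_bt (by omega)
  exact fun hc => (h.ne_int ⌊(q:ℝ)*bt⌋) hc

lemma dZ_intcast_sub (k : ℤ) (x : ℝ) : dZ ((k:ℝ) - x) = dZ x := by
  apply le_antisymm
  · calc dZ ((k:ℝ) - x) ≤ |((k:ℝ)-x) - ((k - round x : ℤ):ℝ)| := dZ_le_abs _ _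
    _ = |x - round x| := by push_cast; rw [show (k:ℝ) - x - ((k:ℝ) - (round x:ℝ)) = -(x - round x) by ring, abs_neg]
    _ = dZ x := rfl
  · calc dZ x ≤ |x - ((k - round ((k:ℝ)-x) : ℤ):ℝ)| := dZ_le_abs _ _
    _ = |((k:ℝ)-x) - round ((k:ℝ)-x)| := by push_cast; rw [show x - ((k:ℝ) - (round ((k:ℝ)-x):ℝ)) = -(((k:ℝ)-x) - round ((k:ℝ)-x)) by ring, abs_neg]
    _ = dZ ((k:ℝ)-x) := rfl

lemma dZ_bt_ga (q : ℕ) : dZ ((q:ℝ)*bt) = dZ ((q:ℝ)*ga) := by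
  have h : (q:ℝ)*bt = ((2*q : ℤ):ℝ) - (q:ℝ)*ga := by push_cast; unfold bt; ring
  rw [h, dZ_intcast_sub]

lemma zf_succ (j : ℕ) : zf (j+1) = Int.fract (zf j + bt) := by rw [zf_add, zf_one]

lemma bt3 : 1 < 3*bt := by unfold bt; linarith [ga_ub]

lemma no11z (j : ℕ) : ¬(zf j < bt ∧ zf (j+1) < bt) := by
  rintro ⟨h1, h2⟩
  rw [zf_succ, fr01 (by linarith [zf_nonneg j, bt_pos]) (by linarith [bt_lt])] at h2
  linarith [zf_nonneg j]

lemma no000z (j : ℕ) : ¬(bt ≤ zf j ∧ bt ≤ zf (j+1) ∧ bt ≤ zf (j+2)) := by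
  rintro ⟨h1, h2, h3⟩
  have hb := bt_pos
  have hb2 := bt_lt
  have hb3 := bt3
  have hz1 := zf_lt_one j
  have hz0 := zf_nonneg j
  rcases le_or_gt 1 (zf j + bt) with hc|hc
  · rw [zf_succ, fr12 hc (by linarith)] at h2
    linarith
  · have e1 : zf (j+1) = zf j + bt := by rw [zf_succ, fr01 (by linarith) hc]
    have e2 : zf (j+2) = zf j + 2*bt - 1 := by
      rw [show j+2 = (j+1)+1 by ring, zf_succ, e1, fr12 (by linarith) (by linarith)]
      ring
    rw [e2] at h3
    linarith

set_option maxHeartbeats 2000000 in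
theorem core {q c k0 : ℕ} (hq : 1 ≤ q)
    (H : ∀ j, k0+1 ≤ j → j ≤ k0+c → (zf j < bt ↔ zf (j+q) < bt)) :
    (c:ℝ) ≤ (1+ga)*q - 1/2 := by
  have hb := bt_pos
  have hb2 := bt_lt
  have hga1 := ga_lb
  have hga2 := ga_ub
  have hqR : (1:ℝ) ≤ (q:ℝ) := by exact_mod_cast hq
  -- trivial case c = 0
  rcases Nat.eq_zero_or_pos c with hc0|hc1
  · subst hc0; push_cast; nlinarith
  -- case q = 1
  rcases eq_or_lt_of_le hq with hq1|hq2
  · have hq1 : q = 1 := hq1.symm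
    subst hq1
    have hcle : c ≤ 2 := by
      by_contra hc3
      push_neg at hc3
      have B1 := H (k0+1) (by omega) (by omega)
      have B2 := H (k0+2) (by omega) (by omega)
      have B3 := H (k0+3) (by omega) (by omega)
      simp only [show k0+1+1 = k0+2 from rfl, show k0+2+1 = k0+3 from rfl, show k0+3+1 = k0+4 from rfl] at B1 B2 B3
      rcases lt_or_ge (zf (k0+1)) bt with h|h
      · refine no11z (k0+1) ⟨h, ?_⟩
        rw [show k0+1+1 = k0+2 by omega]
        exact B1.mp h
      · have n1 : ¬ zf (k0+2) < bt := fun hh => absurd (B1.mpr hh) (not_lt.mpr h)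
        have n2 : ¬ zf (k0+3) < bt := fun hh => absurd (B2.mpr hh) n1
        exact no000z (k0+1) ⟨h, not_lt.mp n1, not_lt.mp n2⟩
    have : (c:ℝ) ≤ 2 := by exact_mod_cast hcle
    push_cast
    linarith
  -- now q ≥ 2
  have hq2 : 2 ≤ q := hq2
  set zq := Int.fract ((q:ℝ)*bt) with hzq_def
  have hzq0 : 0 < zq := zq_pos hq
  have hzq1 : zq < 1 := Int.fract_lt_one _
  have hstep : ∀ j : ℕ, zf (j+q) = Int.fract (zf j + zq) := by
    intro j; rw [zf_add]; rfl
  have hfin : ∀ m : ℕ, 3 ≤ m → c < Nat.fib (m+2) → Nat.fib m ≤ q → (c:ℝ) ≤ (1+ga)*q - 1/2 := by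
    intro m hm3 hcfib hqfib
    have hfg : (1+ga) * ((Nat.fib m : ℕ):ℝ) = ((Nat.fib (m+2):ℕ):ℝ) - (1-ga)^m := by
      have h1 := fib_ga m
      have h2 : (Nat.fib (m+2) : ℝ) = (Nat.fib m : ℝ) + (Nat.fib (m+1) : ℝ) := by
        rw [Nat.fib_add_two]; push_cast; ring
      nlinarith [h1, h2]
    have habs : (1-ga)^m ≤ et m ∧ -et m ≤ (1-ga)^m := by
      rcases Nat.even_or_odd m with he|ho
      · rw [one_sub_ga_pow_even he]; constructor <;> linarith [et_pos m]
      · rw [one_sub_ga_pow_odd ho]; constructor <;> linarith [et_pos m]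
    have het3 : et m ≤ et 3 := et_anti hm3
    have het3h := et3_lt_half
    have hcR : (c:ℝ) + 1 ≤ ((Nat.fib (m+2):ℕ):ℝ) := by exact_mod_cast hcfib
    have hqR2 : ((Nat.fib m : ℕ):ℝ) ≤ (q:ℝ) := by exact_mod_cast hqfib
    have hmul : (1+ga) * ((Nat.fib m : ℕ):ℝ) ≤ (1+ga)*(q:ℝ) := by nlinarith
    linarith [habs.1, habs.2]
  rcases lt_or_ge zq bt with hC1|hC'
  · -- C1 : zq < bt
    have avoid : ∀ j, k0 ≤ j → j ≤ k0+c → zf j < 1 - zq := by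
      intro j hj1 hj2
      by_contra hge
      push_neg at hge
      have hzj1 := zf_lt_one j
      rcases Nat.lt_or_ge k0 j with hj|hj
      · have B := H j (by omega) hj2
        have hlhs : ¬ zf j < bt := by push_neg; nlinarith
        have hrhs : zf (j+q) < bt := by
          rw [hstep, fr12 (by linarith) (by linarith)]
          linarith
        exact hlhs (B.mpr hrhs)
      · have hjk : j = k0 := by omega
        subst hjk
        have B := H (j+1) (by omega) (by omega)
        have e1 : zf (j+1) = zf j + bt - 1 := by
          rw [zf_succ, fr12 (by linarith) (by linarith)]
        have hlhs : zf (j+1) < bt := by rw [e1]; linarith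
        have hrhs : ¬ zf (j+1+q) < bt := by
          rw [hstep, fr01 (by rw [e1]; linarith) (by rw [e1]; linarith)]
          rw [e1]; push_neg; linarith
        exact hrhs (B.mp hlhs)
    obtain ⟨m, hm⟩ := exists_et_le hzq0
    have hex : ∃ m, et m ≤ zq := ⟨m, hm⟩
    set M := Nat.find hex with hM
    have hMspec : et M ≤ zq := Nat.find_spec hex
    have hMmin : ∀ k, k < M → zq < et k := fun k hk => lt_of_not_ge (Nat.find_min hex hk)
    have hM3 : 3 ≤ M := by
      by_contra hM2
      push_neg at hM2
      have : et 2 ≤ et M := et_anti (by omega)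
      rw [et2] at this
      linarith
    obtain ⟨j, hj1, hj2, hj3⟩ := hit1 (by omega : 2 ≤ M) k0
    have hjc : k0 + c < j := by
      by_contra hle
      push_neg at hle
      have := avoid j hj1 hle
      linarith
    have hcfib : c < Nat.fib (M+2) := by omega
    have hdz : dZ ((q:ℝ)*ga) = zq := by
      rw [← dZ_bt_ga, dZ_eq_min, ← hzq_def, min_eq_left (by linarith)]
    have hqfib : Nat.fib M ≤ q := by
      by_contra hlt
      push_neg at hlt
      have hba := BA (M-1) q hq (by rw [show M-1+1 = M by omega]; exact hlt)
      rw [hdz] at hba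
      have := hMmin (M-1) (by omega)
      linarith
    exact hfin M hM3 hcfib hqfib
  · rcases lt_or_ge (1-bt) zq with hC2|hC3
    · -- C2 : zq > 1 - bt
      have avoid : ∀ j, k0 ≤ j → j ≤ k0+c → 1 - zq ≤ zf j := by
        intro j hj1 hj2
        by_contra hge
        push_neg at hge
        have hzj0 := zf_nonneg j
        rcases Nat.lt_or_ge k0 j with hj|hj
        · have B := H j (by omega) hj2
          have hlhs : zf j < bt := by linarith
          have hrhs : ¬ zf (j+q) < bt := by
            rw [hstep, fr01 (by linarith) (by linarith)]
            push_neg; linarith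
          exact hrhs (B.mp hlhs)
        · have hjk : j = k0 := by omega
          subst hjk
          have B := H (j+1) (by omega) (by omega)
          have e1 : zf (j+1) = zf j + bt := by
            rw [zf_succ, fr01 (by linarith) (by linarith)]
          have hlhs : ¬ zf (j+1) < bt := by rw [e1]; push_neg; linarith
          have hrhs : zf (j+1+q) < bt := by
            rw [hstep, fr12 (by rw [e1]; linarith) (by rw [e1]; linarith [zf_lt_one j])]
            rw [e1]; linarith
          exact hlhs (B.mpr hrhs)
      have hdl0 : 0 < 1 - zq := by linarith
      obtain ⟨m, hm⟩ := exists_et_le hdl0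
      have hex : ∃ m, et m ≤ 1 - zq := ⟨m, hm⟩
      set M := Nat.find hex with hM
      have hMspec : et M ≤ 1 - zq := Nat.find_spec hex
      have hMmin : ∀ k, k < M → 1 - zq < et k := fun k hk => lt_of_not_ge (Nat.find_min hex hk)
      have hM3 : 3 ≤ M := by
        by_contra hM2
        push_neg at hM2
        have : et 2 ≤ et M := et_anti (by omega)
        rw [et2] at this
        linarith
      obtain ⟨j, hj1, hj2, hj3⟩ := hit0 (by omega : 2 ≤ M) k0
      have hjc : k0 + c < j := by
        by_contra hle
        push_neg at hle
        have := avoid j hj1 hle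
        linarith
      have hcfib : c < Nat.fib (M+2) := by omega
      have hdz : dZ ((q:ℝ)*ga) = 1 - zq := by
        rw [← dZ_bt_ga, dZ_eq_min, ← hzq_def, min_eq_right (by linarith)]
      have hqfib : Nat.fib M ≤ q := by
        by_contra hlt
        push_neg at hlt
        have hba := BA (M-1) q hq (by rw [show M-1+1 = M by omega]; exact hlt)
        rw [hdz] at hba
        have := hMmin (M-1) (by omega)
        linarith
      exact hfin M hM3 hcfib hqfib
    · -- C3 : bt ≤ zq ≤ 1 - bt
      have avoid : ∀ j, k0+1 ≤ j → j ≤ k0+c → ¬ zf j < bt := by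
        intro j hj1 hj2 hlt
        have B := H j hj1 hj2
        have hrhs : ¬ zf (j+q) < bt := by
          rw [hstep, fr01 (by linarith [zf_nonneg j]) (by linarith)]
          push_neg; linarith [zf_nonneg j]
        exact hrhs (B.mp hlt)
      obtain ⟨j, hj1, hj2, hj3⟩ := hit0 (by omega : 2 ≤ 2) (k0+1)
      have hjc : k0 + c < j := by
        by_contra hle
        push_neg at hle
        rw [et2] at hj3
        exact avoid j hj1 hle hj3
      have hfib4 : Nat.fib (2+2) = 3 := by norm_num [Nat.fib]
      have hc3 : c ≤ 3 := by omega
      have : (c:ℝ) ≤ 3 := by exact_mod_cast hc3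
      have hq2R : (2:ℝ) ≤ (q:ℝ) := by exact_mod_cast hq2
      nlinarith

lemma fract_ga_ne (j : ℕ) (hj : 1 ≤ j) : Int.fract ((j:ℝ)*ga) ≠ 0 := by
  have h : Irrational ((j:ℝ)*ga) := Irrational.natCast_mul irr_ga (by omega)
  have hp : 0 < Int.fract ((j:ℝ)*ga) := Int.fract_pos.mpr (fun hc => (h.ne_int ⌊(j:ℝ)*ga⌋) hc)
  exact ne_of_gt hp

lemma zf_ga_rel (j : ℕ) (hj : 1 ≤ j) : zf j = 1 - Int.fract ((j:ℝ)*ga) := by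
  unfold zf
  have h : (j:ℝ)*bt = ((2*j : ℤ):ℝ) + -((j:ℝ)*ga) := by push_cast; unfold bt; ring
  rw [h, Int.fract_intCast_add, Int.fract_neg (fract_ga_ne j hj)]

lemma lb_claim {n : ℕ} (hn : 4 ≤ n) (he : Even n) {j : ℕ} (h1 : Nat.fib (n+1) < j)
    (h2 : j < Nat.fib (n+3)) : et n < Int.fract ((j:ℝ)*ga) := by
  by_contra hc
  push_neg at hc
  have hdzj : dZ ((j:ℝ)*ga) ≤ et n := by
    rw [dZ_eq_min]
    exact le_trans (min_le_left _ _) hc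
  have hetpos := et_pos n
  have het3 : et n ≤ et 3 := et_anti (by omega)
  have het3v := et3
  have hfadd1 : Nat.fib (n+2) = Nat.fib n + Nat.fib (n+1) := Nat.fib_add_two
  have hfadd2 : Nat.fib (n+3) = Nat.fib (n+1) + Nat.fib (n+2) := Nat.fib_add_two
  have hfadd0 : Nat.fib n = Nat.fib (n-2) + Nat.fib (n-1) := by
    have := Nat.fib_add_two (n := n-2)
    rw [show n-2+2 = n by omega, show n-2+1 = n-1 by omega] at this
    exact this
  have hfib_n1_ga : (Nat.fib (n+1):ℝ)*ga = (Nat.fib (n+2):ℝ) + et (n+1) := by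
    have := fib_ga (n+1)
    rw [one_sub_ga_pow_odd he.add_one] at this
    linarith
  have hfib_n2_ga : (Nat.fib (n+2):ℝ)*ga = (Nat.fib (n+3):ℝ) - et (n+2) := by
    have := fib_ga (n+2)
    rw [one_sub_ga_pow_even (by rcases he with ⟨k1,hk1⟩; exact ⟨k1+1, by omega⟩)] at this
    linarith
  have hga2 := ga_ub
  rcases Nat.lt_trichotomy j (Nat.fib (n+2)) with hj|hj|hj
  · -- fib(n+1) < j < fib(n+2)
    set r := j - Nat.fib (n+1) with hr
    have hr1 : 1 ≤ r := by omega
    have hr2 : r < Nat.fib n := by omega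
    have hsplit : (j:ℝ)*ga = (r:ℝ)*ga + (Nat.fib (n+1):ℝ)*ga := by
      have : (j:ℝ) = (r:ℝ) + (Nat.fib (n+1):ℝ) := by
        exact_mod_cast congrArg (Nat.cast : ℕ → ℝ) (by omega : j = r + Nat.fib (n+1))
      rw [this]; ring
    rcases eq_or_ne r (Nat.fib (n-1)) with hreq|hrne
    · -- r = fib (n-1) : exact fract value
      have hfib_m1_ga : (Nat.fib (n-1):ℝ)*ga = (Nat.fib n:ℝ) + et (n-1) := by
        have := fib_ga (n-1)
        rw [show n-1+1 = n by omega] at this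
        rw [one_sub_ga_pow_odd (by rcases he with ⟨k,hk⟩; exact ⟨k-1, by omega⟩)] at this
        linarith
      have hv : (j:ℝ)*ga = ((Nat.fib n + Nat.fib (n+2) : ℤ):ℝ) + (et (n-1) + et (n+1)) := by
        rw [hsplit, hreq, hfib_m1_ga, hfib_n1_ga]; push_cast; ring
      have hfr : Int.fract ((j:ℝ)*ga) = et (n-1) + et (n+1) := by
        rw [hv, Int.fract_intCast_add, fr01 (by linarith [et_pos (n-1), et_pos (n+1)])
          (by linarith [et_anti (show 3 ≤ n-1 by omega), et_anti (show 3 ≤ n+1 by omega), et3_lt_half])]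
      rw [hfr] at hc
      have := et_rec (n-1)
      rw [show n-1+1 = n by omega, show n-1+2 = n+1 by omega] at this
      linarith [et_pos (n+1)]
    · -- r ≠ fib (n-1)
      have hdzr : et (n-2) ≤ dZ ((r:ℝ)*ga) := by
        rcases Nat.lt_or_ge r (Nat.fib (n-1)) with hlt|hge
        · have := BA (n-2) r hr1 (by rw [show n-2+1 = n-1 by omega]; exact hlt)
          exact this
        · have hgt : Nat.fib (n-1) < r := lt_of_le_of_ne hge (Ne.symm hrne)
          set r' := r - Nat.fib (n-1) with hr'
          have hr'1 : 1 ≤ r' := by omega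
          have hr'2 : r' < Nat.fib (n-2) := by omega
          have hsplit' : (r:ℝ)*ga = (r':ℝ)*ga + (Nat.fib (n-1):ℝ)*ga := by
            have : (r:ℝ) = (r':ℝ) + (Nat.fib (n-1):ℝ) := by
              exact_mod_cast congrArg (Nat.cast : ℕ → ℝ) (by omega : r = r' + Nat.fib (n-1))
            rw [this]; ring
          have hba := BA (n-3) r' hr'1 (by rw [show n-3+1 = n-2 by omega]; exact hr'2)
          have hsub := dZ_sub_le ((r':ℝ)*ga) ((Nat.fib (n-1):ℝ)*ga)
          rw [← hsplit'] at hsub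
          have hdf : dZ ((Nat.fib (n-1):ℝ)*ga) = et (n-1) := dZ_fib_ga (by omega)
          have hrec := et_rec (n-3)
          rw [show n-3+1 = n-2 by omega, show n-3+2 = n-1 by omega] at hrec
          linarith
      have hsub := dZ_sub_le ((r:ℝ)*ga) ((Nat.fib (n+1):ℝ)*ga)
      rw [← hsplit] at hsub
      have hdf : dZ ((Nat.fib (n+1):ℝ)*ga) = et (n+1) := dZ_fib_ga (by omega)
      have hrec1 := et_rec (n-2)
      rw [show n-2+1 = n-1 by omega, show n-2+2 = n by omega] at hrec1
      have hrec2 := et_rec (n-1)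
      rw [show n-1+1 = n by omega, show n-1+2 = n+1 by omega] at hrec2
      linarith
  · -- j = fib (n+2)
    subst hj
    have hv : (Nat.fib (n+2):ℝ)*ga = ((Nat.fib (n+3) - 1 : ℤ):ℝ) + (1 - et (n+2)) := by
      rw [hfib_n2_ga]; push_cast; ring
    have hfr : Int.fract ((Nat.fib (n+2):ℝ)*ga) = 1 - et (n+2) := by
      rw [hv, Int.fract_intCast_add, fr01 (by linarith [et_lt_one (show 1 ≤ n+2 by omega)])
        (by linarith [et_pos (n+2)])]
    rw [hfr] at hc
    have h1 : et (n+2) ≤ et 3 := et_anti (by omega)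
    rw [et3] at het3 h1
    linarith
  · -- fib(n+2) < j < fib(n+3)
    set r := j - Nat.fib (n+2) with hr
    have hr1 : 1 ≤ r := by omega
    have hr2 : r < Nat.fib (n+1) := by omega
    have hsplit : (r:ℝ)*ga = (j:ℝ)*ga + -((Nat.fib (n+2):ℝ)*ga) := by
      have : (r:ℝ) = (j:ℝ) - (Nat.fib (n+2):ℝ) := by
        have hje : j = r + Nat.fib (n+2) := by omega
        rw [hje]; push_cast; ring
      rw [this]; ring
    have hdZneg : dZ (-((Nat.fib (n+2):ℝ)*ga)) = et (n+2) := by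
      have : -((Nat.fib (n+2):ℝ)*ga) = ((0:ℤ):ℝ) - (Nat.fib (n+2):ℝ)*ga := by push_cast; ring
      rw [this, dZ_intcast_sub, dZ_fib_ga (by omega)]
    have hdzr_le : dZ ((r:ℝ)*ga) ≤ et n + et (n+2) := by
      have := dZ_add_le ((j:ℝ)*ga) (-((Nat.fib (n+2):ℝ)*ga))
      rw [← hsplit, hdZneg] at this
      linarith
    have hrec2 := et_rec (n-1)
    rw [show n-1+1 = n by omega, show n-1+2 = n+1 by omega] at hrec2
    have hlt_rec : et n + et (n+2) < et (n-1) := by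
      have := et_succ_lt (n+1)
      linarith
    have hrfib : Nat.fib n ≤ r := by
      by_contra hlt
      push_neg at hlt
      have := BA (n-1) r hr1 (by rw [show n-1+1 = n by omega]; exact hlt)
      linarith
    rcases eq_or_lt_of_le hrfib with hreq|hrgt
    · -- r = fib n
      have hfib_n_ga : (Nat.fib n:ℝ)*ga = (Nat.fib (n+1):ℝ) - et n := by
        have := fib_ga n
        rw [one_sub_ga_pow_even he] at this
        linarith
      have hv : (j:ℝ)*ga = ((Nat.fib (n+1) + Nat.fib (n+3) - 1 : ℤ):ℝ) + (1 - et n - et (n+2)) := by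
        have hje : (j:ℝ) = (Nat.fib n:ℝ) + (Nat.fib (n+2):ℝ) := by
          exact_mod_cast congrArg (Nat.cast : ℕ → ℝ) (by omega : j = Nat.fib n + Nat.fib (n+2))
        have : (j:ℝ)*ga = (Nat.fib n:ℝ)*ga + (Nat.fib (n+2):ℝ)*ga := by rw [hje]; ring
        rw [this, hfib_n_ga, hfib_n2_ga]; push_cast; ring
      have h1 : et (n+2) ≤ et 3 := et_anti (by omega)
      have hfr : Int.fract ((j:ℝ)*ga) = 1 - et n - et (n+2) := by
        rw [hv, Int.fract_intCast_add, fr01 (by rw [et3] at het3 h1; linarith)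
          (by linarith [et_pos n, et_pos (n+2)])]
      rw [hfr] at hc
      rw [et3] at het3 h1
      linarith
    · -- fib n < r
      have hfa : Nat.fib (n+1) = Nat.fib (n-1) + Nat.fib n := by
        have := Nat.fib_add_two (n := n-1)
        rw [show n-1+2 = n+1 by omega, show n-1+1 = n by omega] at this
        exact this
      set r' := r - Nat.fib n with hr'
      have hr'1 : 1 ≤ r' := by omega
      have hr'2 : r' < Nat.fib (n-1) := by omega
      have hsplit' : (r:ℝ)*ga = (r':ℝ)*ga + (Nat.fib n:ℝ)*ga := by
        have : (r:ℝ) = (r':ℝ) + (Nat.fib n:ℝ) := by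
          exact_mod_cast congrArg (Nat.cast : ℕ → ℝ) (by omega : r = r' + Nat.fib n)
        rw [this]; ring
      have hba := BA (n-2) r' hr'1 (by rw [show n-2+1 = n-1 by omega]; exact hr'2)
      have hsub := dZ_sub_le ((r':ℝ)*ga) ((Nat.fib n:ℝ)*ga)
      rw [← hsplit'] at hsub
      have hdf : dZ ((Nat.fib n:ℝ)*ga) = et n := dZ_fib_ga (by omega)
      have hrec1 := et_rec (n-2)
      rw [show n-2+1 = n-1 by omega, show n-2+2 = n by omega] at hrec1
      linarith

lemma lb_bicond {n : ℕ} (hn : 4 ≤ n) (he : Even n) {j : ℕ}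
    (h1 : Nat.fib (n+1) + 2 ≤ j) (h2 : j ≤ Nat.fib (n+3) - 1) :
    (zf j < bt ↔ zf (j + Nat.fib n) < bt) := by
  have hfadd2 : Nat.fib (n+3) = Nat.fib (n+1) + Nat.fib (n+2) := Nat.fib_add_two
  have hfibn2 : 8 ≤ Nat.fib (n+2) := by
    calc 8 = Nat.fib 6 := by norm_num [Nat.fib]
    _ ≤ Nat.fib (n+2) := Nat.fib_mono (by omega)
  have hq : Nat.fib n ≥ 1 := Nat.fib_pos.mpr (by omega)
  have hz1 : zf j < 1 - et n := by
    have := lb_claim hn he (j := j) (by omega) (by omega)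
    rw [zf_ga_rel j (by omega)]
    linarith
  have hz2 : zf (j-1) < 1 - et n := by
    have := lb_claim hn he (j := j-1) (by omega) (by omega)
    rw [zf_ga_rel (j-1) (by omega)]
    linarith
  have hpsi : zf (Nat.fib n) = et n := zf_fib_even (by omega) he
  have hstep : zf (j + Nat.fib n) = Int.fract (zf j + et n) := by
    rw [zf_add, hpsi]
  have hsucc : zf j = Int.fract (zf (j-1) + bt) := by
    have : j = (j-1) + 1 := by omega
    rw [this, zf_succ]
    rw [← this]
  have hb := bt_pos
  have hb2 := bt_lt
  have hetp := et_pos n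
  have hetb : et n < bt := by
    calc et n ≤ et 3 := et_anti (by omega)
    _ < et 2 := et_succ_lt 2
    _ = bt := et2
  have hz0 := zf_nonneg j
  have hzlt := zf_lt_one j
  have hz0' := zf_nonneg (j-1)
  -- not in arc2 : ¬ (bt - et n ≤ zf j ∧ zf j < bt)
  have harc2 : ¬ (bt - et n ≤ zf j ∧ zf j < bt) := by
    rintro ⟨ha, hbb⟩
    rcases lt_or_ge (zf (j-1) + bt) 1 with hcc|hcc
    · rw [hsucc, fr01 (by linarith) hcc] at hbb
      linarith
    · rw [hsucc, fr12 hcc (by linarith [zf_lt_one (j-1)])] at ha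
      linarith
  constructor
  · intro hlt
    have hlt2 : zf j < bt - et n := by
      rcases lt_or_ge (zf j) (bt - et n) with h|h
      · exact h
      · exact absurd ⟨h, hlt⟩ harc2
    rw [hstep, fr01 (by linarith) (by linarith)]
    linarith
  · intro hlt
    by_contra hge
    push_neg at hge
    rw [hstep, fr01 (by linarith) (by linarith)] at hlt
    linarith

-- ====================== list level ======================


lemma applyM_nil (m : Bool → List Bool) : applyM m [] = [] := rfl
lemma applyM_cons (m : Bool → List Bool) (a : Bool) (l : List Bool) :
    applyM m (a :: l) = m a ++ applyM m l := by
  simp [applyM]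

def sl (l : List Bool) (m : ℕ) : ℕ := (applyM phiM (l.take m)).length

lemma sl_zero (l : List Bool) : sl l 0 = 0 := rfl
lemma sl_cons (a : Bool) (l : List Bool) (m : ℕ) :
    sl (a :: l) (m+1) = (phiM a).length + sl l m := by
  simp [sl, List.take_succ_cons, applyM_cons]

lemma blockLen_ge (a : Bool) : 2 ≤ (phiM a).length := by cases a <;> simp [phiM]
lemma blockLen_le (a : Bool) : (phiM a).length ≤ 3 := by cases a <;> simp [phiM]

lemma sl_ge (l : List Bool) : ∀ m, m ≤ l.length → 2*m ≤ sl l m := by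
  induction l with
  | nil => intro m hm; simp at hm; simp [hm, sl_zero]
  | cons a l ih =>
    intro m hm
    cases m with
    | zero => simp [sl_zero]
    | succ k =>
      rw [sl_cons]
      have := ih k (by simpa using hm)
      have := blockLen_ge a
      omega

lemma phi_len_eq_sl (l : List Bool) : (applyM phiM l).length = sl l l.length := by
  simp [sl]

lemma phi_pos (l : List Bool) : ∀ t, t < (applyM phiM l).length →
    ((applyM phiM l).getD t false = true ↔ ∃ m, m < l.length ∧ t + 1 = sl l (m+1)) := by
  induction l with
  | nil => intro t ht; simp [applyM] at ht
  | cons a l ih =>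
    intro t ht
    rw [applyM_cons] at ht ⊢
    rcases Nat.lt_or_ge t (phiM a).length with hlt|hge
    · rw [List.getD_append _ _ _ _ hlt]
      constructor
      · intro hv
        refine ⟨0, by simp, ?_⟩
        rw [sl_cons, sl_zero]
        -- value true within block implies t = len - 1
        cases a
        · simp [phiM] at hlt hv ⊢
          interval_cases t <;> simp_all [phiM]
        · simp [phiM] at hlt hv ⊢
          interval_cases t <;> simp_all [phiM]
      · rintro ⟨m, hm, hsl⟩
        have hm0 : m = 0 := by
          by_contra hne
          have h1 : 1 ≤ m := by omega
          have h2 : m ≤ l.length := by simpa using Nat.lt_succ_iff.mp hm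
          cases m with
          | zero => omega
          | succ k =>
            rw [sl_cons] at hsl
            have hk : k + 1 ≤ l.length := h2
            have := sl_ge l (k+1) hk
            omega
        subst hm0
        rw [sl_cons, sl_zero] at hsl
        have ht' : t = (phiM a).length - 1 := by omega
        subst ht'
        cases a <;> simp [phiM]
    · rw [List.getD_append_right _ _ _ _ hge]
      have ht2 : t - (phiM a).length < (applyM phiM l).length := by
        rw [List.length_append] at ht; omega
      rw [ih _ ht2]
      constructor
      · rintro ⟨m, hm, hsl⟩
        refine ⟨m+1, by simpa using Nat.succ_lt_succ hm, ?_⟩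
        rw [sl_cons]
        omega
      · rintro ⟨m, hm, hsl⟩
        cases m with
        | zero =>
          rw [sl_cons, sl_zero] at hsl
          omega
        | succ k =>
          refine ⟨k, by simpa using hm, ?_⟩
          rw [sl_cons] at hsl
          omega


lemma applyM_append (m : Bool → List Bool) (l1 l2 : List Bool) :
    applyM m (l1 ++ l2) = applyM m l1 ++ applyM m l2 := by
  simp [applyM]

lemma sl_step (l : List Bool) (m : ℕ) (hm : m < l.length) :
    sl l (m+1) = sl l m + (phiM (l.getD m false)).length := by
  unfold sl
  have h1 : l.take (m+1) = l.take m ++ [l[m]] := by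
    rw [List.take_succ, List.getElem?_eq_getElem hm]
    rfl
  rw [h1, applyM_append, List.length_append, List.getD_eq_getElem l false hm]
  congr 1
  simp [applyM]

lemma sl_eval (l : List Bool)
    (hmatch : ∀ r, r < l.length → (l.getD r false = true ↔ zf (r+1) < bt)) :
    ∀ m, m ≤ l.length → ((sl l m : ℕ):ℝ) = 3*m - m*bt + zf m := by
  intro m
  induction m with
  | zero => intro _; simp [sl_zero, zf_zero]
  | succ k ih =>
    intro hk
    have hk' : k < l.length := by omega
    rw [sl_step l k hk']
    have ihh := ih (by omega)
    have hz1 := zf_lt_one k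
    have hz0 := zf_nonneg k
    have hb := bt_pos
    have hb2 := bt_lt
    rcases lt_or_ge (zf k + bt) 1 with hc|hc
    · -- no wrap: zf (k+1) = zf k + bt ≥ bt, so letter is false, block length 3
      have hzk1 : zf (k+1) = zf k + bt := by rw [zf_succ, fr01 (by linarith) hc]
      have hfalse : l.getD k false = false := by
        cases hbool : l.getD k false
        · rfl
        · exfalso
          have := (hmatch k hk').mp hbool
          rw [hzk1] at this
          linarith
      rw [hfalse]
      push_cast
      rw [hzk1]
      simp only [phiM, if_false, Bool.false_eq_true, List.length_cons, List.length_nil]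
      push_cast
      linarith
    · -- wrap : zf (k+1) = zf k + bt - 1 < bt, letter true, block length 2
      have hzk1 : zf (k+1) = zf k + bt - 1 := by rw [zf_succ, fr12 hc (by linarith)]
      have htrue : l.getD k false = true := by
        rw [hmatch k hk', hzk1]
        linarith
      rw [htrue]
      push_cast
      rw [hzk1]
      simp only [phiM, if_true, List.length_cons, List.length_nil]
      push_cast
      linarith

lemma bt_mul_onega : bt * (1 + ga) = 1 := by unfold bt; nlinarith [ga_sq]

set_option maxHeartbeats 2000000 in
lemma FE (T L : ℕ) (hT : 1 ≤ T) (hT2 : (T:ℝ) ≤ 3*L - L*bt + zf L) :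
    ((∃ m', 1 ≤ m' ∧ m' ≤ L ∧ (T:ℝ) = 3*m' - m'*bt + zf m') ↔ zf T < bt) := by
  have hb := bt_pos
  have hb2 := bt_lt
  have hga := ga_lb
  have hkey := bt_mul_onega
  constructor
  · rintro ⟨m', hm1, hm2, heq⟩
    -- m'(1+ga) = T - zf m' ∈ (T-1, T)
    have hz0 := zf_nonneg m'
    have hz1 := zf_lt_one m'
    have hzne : zf m' ≠ 0 := by
      unfold zf
      have h : Irrational ((m':ℝ)*bt) := Irrational.natCast_mul irr_bt (by omega)
      exact ne_of_gt (Int.fract_pos.mpr (fun hc => (h.ne_int ⌊(m':ℝ)*bt⌋) hc))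
    have hbg : (1:ℝ) + ga = 3 - bt := by unfold bt; ring
    have hrep : (m':ℝ) * (1+ga) = (T:ℝ) - zf m' := by
      rw [hbg]
      have hexp : (m':ℝ) * (3 - bt) = 3*(m':ℝ) - (m':ℝ)*bt := by ring
      rw [hexp]
      linarith [heq]
    have hpos : 0 < zf m' := lt_of_le_of_ne hz0 (Ne.symm hzne)
    have hlo : ((T:ℝ)-1) * bt < (m':ℝ) := by
      have h1 : ((T:ℝ)-1) < (m':ℝ)*(1+ga) := by linarith [hrep, hz1]
      nlinarith
    have hhi : (m':ℝ) < (T:ℝ) * bt := by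
      have h1 : (m':ℝ)*(1+ga) < (T:ℝ) := by linarith [hrep, hpos]
      nlinarith
    -- floor (T bt) ≥ m'
    have hfl : (m':ℝ) ≤ (⌊(T:ℝ)*bt⌋ : ℝ) := by
      exact_mod_cast Int.le_floor.mpr (by exact_mod_cast le_of_lt hhi)
    have : zf T = (T:ℝ)*bt - ⌊(T:ℝ)*bt⌋ := rfl
    rw [this]
    linarith
  · intro hzT
    have hTbt_pos : bt ≤ (T:ℝ)*bt := by
      have : (1:ℝ) ≤ (T:ℝ) := by exact_mod_cast hT
      nlinarith
    have hfl_pos : 1 ≤ ⌊(T:ℝ)*bt⌋ := by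
      by_contra hh
      push_neg at hh
      have h0 : ⌊(T:ℝ)*bt⌋ ≤ 0 := by omega
      have : zf T = (T:ℝ)*bt - ⌊(T:ℝ)*bt⌋ := rfl
      have hfloor_cast : (⌊(T:ℝ)*bt⌋:ℝ) ≤ 0 := by exact_mod_cast h0
      rw [this] at hzT
      linarith
    set m' : ℕ := (⌊(T:ℝ)*bt⌋).toNat with hm'
    have hcast : ((m':ℕ):ℝ) = (⌊(T:ℝ)*bt⌋ : ℝ) := by
      rw [hm']
      exact_mod_cast Int.toNat_of_nonneg (by omega)
    have hm1 : 1 ≤ m' := by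
      rw [hm']; omega
    have hup : (m':ℝ) ≤ (T:ℝ)*bt := by rw [hcast]; exact Int.floor_le _
    have hlo : ((T:ℝ)-1)*bt < (m':ℝ) := by
      have : zf T = (T:ℝ)*bt - ⌊(T:ℝ)*bt⌋ := rfl
      rw [this] at hzT
      rw [hcast]
      nlinarith
    -- m' ≤ L
    have hm2 : m' ≤ L := by
      have hL : (T:ℝ) ≤ 3*L - L*bt + zf L := hT2
      have hzL := zf_lt_one L
      have h1 : (m':ℝ) < (L:ℝ) + 1 := by
        have hTle : (T:ℝ)*bt ≤ (3*L - L*bt + zf L)*bt := by nlinarith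
        have hexp : (3*(L:ℝ) - L*bt)*bt = (L:ℝ)*((3-bt)*bt) := by ring
        have h3bt : (3-bt)*bt = 1 := by
          have : (3:ℝ) - bt = 1 + ga := by unfold bt; ring
          rw [this]; nlinarith [bt_mul_onega]
        nlinarith
      exact_mod_cast Nat.lt_succ_iff.mp (by exact_mod_cast h1)
    refine ⟨m', hm1, hm2, ?_⟩
    -- E := 3m' - m' bt + zf m' is an integer in (T-1, T+1)
    have hE : 3*(m':ℝ) - m'*bt + zf m' = ((3*(m':ℤ) - ⌊(m':ℝ)*bt⌋ : ℤ):ℝ) := by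
      have : zf m' = (m':ℝ)*bt - ⌊(m':ℝ)*bt⌋ := rfl
      rw [this]; push_cast; ring
    have hirrT : (T:ℝ)*bt ≠ ((⌊(T:ℝ)*bt⌋ : ℤ):ℝ) := by
      have h : Irrational ((T:ℝ)*bt) := Irrational.natCast_mul irr_bt (by omega)
      exact h.ne_int _
    have hup' : (m':ℝ) < (T:ℝ)*bt := lt_of_le_of_ne (by rw [hcast]; exact Int.floor_le _)
      (by rw [hcast]; exact fun hc => hirrT hc.symm)
    have hgap1 : (T:ℝ) - 1 < (m':ℝ)*(1+ga) := by nlinarith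
    have hgap2 : (m':ℝ)*(1+ga) < (T:ℝ) := by nlinarith
    have hz0 := zf_nonneg m'
    have hz1 := zf_lt_one m'
    have hEval : (T:ℝ) - 1 < 3*(m':ℝ) - m'*bt + zf m' ∧ 3*(m':ℝ) - m'*bt + zf m' < (T:ℝ) + 1 := by
      have hexpand : 3*(m':ℝ) - m'*bt = (m':ℝ)*(1+ga) + (m':ℝ)*(2 - ga - bt) := by ring
      have hzero : (2:ℝ) - ga - bt = 0 := by unfold bt; ring
      rw [hexpand, hzero]
      constructor <;> nlinarith
    have hint : (3*(m':ℤ) - ⌊(m':ℝ)*bt⌋ : ℤ) = (T:ℤ) := by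
      have h1 : ((T:ℤ):ℝ) - 1 < ((3*(m':ℤ) - ⌊(m':ℝ)*bt⌋ : ℤ):ℝ) := by
        rw [← hE]; push_cast; linarith [hEval.1]
      have h2 : ((3*(m':ℤ) - ⌊(m':ℝ)*bt⌋ : ℤ):ℝ) < ((T:ℤ):ℝ) + 1 := by
        rw [← hE]; push_cast; linarith [hEval.2]
      have hi1 : (T:ℤ) - 1 < 3*(m':ℤ) - ⌊(m':ℝ)*bt⌋ := by exact_mod_cast h1
      have hi2 : (3*(m':ℤ) - ⌊(m':ℝ)*bt⌋ : ℤ) < (T:ℤ) + 1 := by exact_mod_cast h2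
      omega
    rw [hE, hint]
    push_cast
    ring

set_option maxHeartbeats 2000000 in
theorem bridge : ∀ N k, k < (phiIter N).length → ((phiIter N).getD k false = true ↔ zf (k+1) < bt) := by
  intro N
  induction N with
  | zero =>
    intro k hk
    have hk0 : k = 0 := by simp [phiIter] at hk; omega
    subst hk0
    simp [phiIter, zf_one]
  | succ n ih =>
    intro t ht
    have hL := phi_len_eq_sl (phiIter n)
    have hphi : phiIter (n+1) = applyM phiM (phiIter n) := rfl
    rw [hphi] at ht ⊢
    rw [phi_pos _ t ht]
    set l := phiIter n with hl
    set L := l.length with hLdef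
    have heval := sl_eval l ih
    have hT2 : ((t+1:ℕ):ℝ) ≤ 3*L - L*bt + zf L := by
      have h1 : t + 1 ≤ sl l L := by rw [← hL]; omega
      have h2 : ((t+1:ℕ):ℝ) ≤ ((sl l L : ℕ):ℝ) := by exact_mod_cast h1
      rw [heval L (le_refl _)] at h2
      exact h2
    have hFE := FE (t+1) L (by omega) (by push_cast at hT2 ⊢; exact hT2)
    rw [← hFE]
    constructor
    · rintro ⟨m, hm, hsl⟩
      refine ⟨m+1, by omega, by omega, ?_⟩
      have := heval (m+1) (by omega)
      rw [← this]
      exact_mod_cast congrArg (Nat.cast : ℕ → ℝ) hsl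
    · rintro ⟨m', hm1, hm2, heq⟩
      refine ⟨m'-1, by omega, ?_⟩
      have := heval m' hm2
      rw [← this] at heq
      have : t + 1 = sl l m' := by exact_mod_cast heq
      rw [show m'-1+1 = m' by omega]
      exact this

-- ==================== g level ====================

lemma gM_len (l : List Bool) : (applyM gM l).length = 2*l.length := by
  induction l with
  | nil => rfl
  | cons a l ih =>
    rw [applyM_cons, List.length_append, ih]
    cases a <;> simp [gM] <;> omega

lemma gM_block_len (a : Bool) : (gM a).length = 2 := by cases a <;> rfl

lemma gM_even (l : List Bool) : ∀ k, k < l.length →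
    (applyM gM l).getD (2*k) false = l.getD k false := by
  induction l with
  | nil => intro k hk; simp at hk
  | cons a l ih =>
    intro k hk
    rw [applyM_cons]
    cases k with
    | zero =>
      rw [List.getD_append _ _ _ _ (by rw [gM_block_len]; omega)]
      cases a <;> rfl
    | succ k' =>
      rw [List.getD_append_right _ _ _ _ (by rw [gM_block_len]; omega)]
      rw [gM_block_len, show 2*(k'+1) - 2 = 2*k' by omega]
      exact ih k' (by simpa using hk)

lemma gM_odd (l : List Bool) : ∀ k, k < l.length →
    (applyM gM l).getD (2*k+1) false = true := by
  induction l with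
  | nil => intro k hk; simp at hk
  | cons a l ih =>
    intro k hk
    rw [applyM_cons]
    cases k with
    | zero =>
      rw [List.getD_append _ _ _ _ (by rw [gM_block_len]; omega)]
      cases a <;> rfl
    | succ k' =>
      rw [List.getD_append_right _ _ _ _ (by rw [gM_block_len]; omega)]
      rw [gM_block_len, show 2*(k'+1)+1 - 2 = 2*k'+1 by omega]
      exact ih k' (by simpa using hk)

lemma phiIter_len (N : ℕ) : N + 1 ≤ (phiIter N).length := by
  induction N with
  | zero => simp [phiIter]
  | succ n ih =>
    have h1 : (phiIter (n+1)).length = sl (phiIter n) (phiIter n).length := phi_len_eq_sl _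
    have h2 := sl_ge (phiIter n) (phiIter n).length (le_refl _)
    omega

def WL (N : ℕ) : List Bool := applyM gM (phiIter N)

lemma WL_len (N : ℕ) : (WL N).length = 2*(phiIter N).length := gM_len _

lemma WL_even (N k : ℕ) (hk : k < (phiIter N).length) :
    ((WL N).getD (2*k) false = true ↔ zf (k+1) < bt) := by
  rw [WL, gM_even _ k hk]
  exact bridge N k hk

lemma WL_odd (N k : ℕ) (hk : k < (phiIter N).length) : (WL N).getD (2*k+1) false = true :=
  gM_odd _ k hk

lemma WL_odd' (N p : ℕ) (hp : p < (WL N).length) (hodd : Odd p) : (WL N).getD p false = true := by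
  obtain ⟨k, hk⟩ := hodd
  rw [hk]
  exact WL_odd N k (by have := WL_len N; omega)

lemma infix_getD {u v : List Bool} (h : u <:+: v) :
    ∃ i, i + u.length ≤ v.length ∧ ∀ t, t < u.length → u.getD t false = v.getD (i+t) false := by
  obtain ⟨s, t', hst⟩ := h
  refine ⟨s.length, ?_, ?_⟩
  · rw [← hst]; simp only [List.length_append]; omega
  · intro t ht
    rw [← hst, List.append_assoc, List.getD_append_right _ _ _ _ (by omega),
      show s.length + t - s.length = t by omega, List.getD_append _ _ _ _ ht]

lemma bool_eq_of_iff {a b : Bool} (h : a = true ↔ b = true) : a = b := by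
  cases a <;> cases b <;> simp_all

-- ==================== antisquare theorem ====================

theorem antisquare_main {u : List Bool} {N : ℕ} (hinf : u <:+: WL N)
    (ha : ∃ y : List Bool, y ≠ [] ∧ u = y ++ y.map (fun b => !b)) :
    u = [false, true] ∨ u = [true, false] := by
  obtain ⟨y, hy0, hyu⟩ := ha
  set m := y.length with hm
  have hm1 : 1 ≤ m := by
    rcases y with _|⟨a,l⟩
    · exact absurd rfl hy0
    · simp [hm]
  have hulen : u.length = 2*m := by rw [hyu]; simp [hm, two_mul]
  obtain ⟨i, hibound, hgetD⟩ := infix_getD hinf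
  have hWLlen := WL_len N
  have hphilen : i + 2*m ≤ 2*(phiIter N).length := by omega
  -- negation relation
  have hneg : ∀ t, t < m → u.getD (m+t) false = !(u.getD t false) := by
    intro t ht
    rw [hyu, List.getD_append_right _ _ _ _ (by omega), show m + t - y.length = t by omega,
      List.getD_append _ _ _ _ (by omega : t < y.length)]
    rw [List.getD_eq_getElem _ _ (by simpa using ht), List.getD_eq_getElem _ _ (by simpa using ht)]
    simp
  rcases eq_or_lt_of_le hm1 with hmeq|hm2
  · -- m = 1
    obtain ⟨a, hay⟩ := List.length_eq_one_iff.mp hmeq.symm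
    rw [hyu, hay]
    cases a
    · left; rfl
    · right; rfl
  · -- m ≥ 2
    have hm2 : 2 ≤ m := hm2
    rcases Nat.even_or_odd m with hme|hmo
    · -- m even : contradiction
      exfalso
      set t := if Even i then 1 else 0 with htdef
      have htm : t < m := by rw [htdef]; split_ifs <;> omega
      have hoddit : Odd (i + t) := by
        rcases Nat.even_or_odd i with h|h
        · have ht1 : t = 1 := by rw [htdef, if_pos h]
          rw [ht1]; exact h.add_one
        · have ht0 : t = 0 := by rw [htdef, if_neg (by rwa [Nat.not_even_iff_odd])]
          rw [ht0, Nat.add_zero]; exact h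
      have h1 : u.getD t false = true := by
        rw [hgetD t (by omega)]
        exact WL_odd' N (i+t) (by omega) hoddit
      have h2 : u.getD (m+t) false = true := by
        rw [hgetD (m+t) (by omega)]
        refine WL_odd' N (i+(m+t)) (by omega) ?_
        obtain ⟨k,hk⟩ := hoddit
        obtain ⟨k2,hk2⟩ := hme
        exact ⟨k+k2, by omega⟩
      rw [hneg t htm, h1] at h2
      simp at h2
    · -- m odd, m ≥ 3 : contradiction via no000z
      exfalso
      have hm3 : 3 ≤ m := by
        rcases hmo with ⟨k,hk⟩; omega
      set k0 := (i+1)/2 with hk0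
      have hzero : ∀ r, r ≤ 2 → ¬ ((phiIter N).getD (k0+r) false = true) := by
        intro r hr
        have hpos1 : i ≤ 2*(k0+r) := by omega
        have hpos2 : 2*(k0+r) + 1 ≤ i + 2*m := by omega
        have hkr_lt : k0 + r < (phiIter N).length := by omega
        rcases Nat.lt_or_ge (2*(k0+r)) (i+m) with hcase|hcase
        · -- t even case
          set t := 2*(k0+r) - i with ht
          have htm : t < m := by omega
          have hit : i + t = 2*(k0+r) := by omega
          have h1 : u.getD (m+t) false = true := by
            rw [hgetD (m+t) (by omega)]
            refine WL_odd' N (i+(m+t)) (by omega) ?_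
            rcases hmo with ⟨k,hk⟩
            exact ⟨k0+r+k, by omega⟩
          have h2 := hneg t htm
          rw [h1] at h2
          have h3 : u.getD t false = false := by
            cases hb : u.getD t false
            · rfl
            · rw [hb] at h2; simp at h2
          intro hcontra
          rw [hgetD t (by omega), hit, WL, gM_even _ (k0+r) hkr_lt, hcontra] at h3
          simp at h3
        · -- t odd case
          set t := 2*(k0+r) - i - m with ht
          have htm : t < m := by omega
          have hit : i + t = 2*(k0+r) - m := by omega
          have h1 : u.getD t false = true := by
            rw [hgetD t (by omega), hit]
            refine WL_odd' N (2*(k0+r)-m) (by omega) ?_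
            rcases hmo with ⟨k,hk⟩
            exact ⟨k0+r-k-1, by omega⟩
          have h2 := hneg t htm
          rw [h1] at h2
          intro hcontra
          rw [hgetD (m+t) (by omega), show i + (m+t) = 2*(k0+r) by omega, WL,
            gM_even _ (k0+r) hkr_lt, hcontra] at h2
          simp at h2
      have hz1 := hzero 0 (by omega)
      have hz2 := hzero 1 (by omega)
      have hz3 := hzero 2 (by omega)
      have hL := phiIter_len N
      have hb1 : bt ≤ zf (k0+1) := by
        by_contra hc
        push_neg at hc
        have := (bridge N k0 (by omega)).mpr hc
        exact hz1 (by simpa using this)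
      have hb2 : bt ≤ zf (k0+2) := by
        by_contra hc
        push_neg at hc
        have := (bridge N (k0+1) (by omega)).mpr (by rwa [show k0+1+1 = k0+2 by omega])
        exact hz2 this
      have hb3 : bt ≤ zf (k0+3) := by
        by_contra hc
        push_neg at hc
        have := (bridge N (k0+2) (by omega)).mpr (by rwa [show k0+2+1 = k0+3 by omega])
        exact hz3 this
      exact no000z (k0+1) ⟨hb1, by rwa [show k0+1+1 = k0+2 by omega],
        by rwa [show k0+1+2 = k0+3 by omega]⟩


set_option maxHeartbeats 2000000 in
theorem upper_main {u : List Bool} {N p : ℕ} (hinf : u <:+: WL N) (hper : HasPeriod u p) :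
    (u.length : ℝ) ≤ (2+ga)*p := by
  obtain ⟨hp1, hperi⟩ := hper
  obtain ⟨i, hib, hgetD⟩ := infix_getD hinf
  set len := u.length with hlen
  have hga := ga_lb
  have hpR : (1:ℝ) ≤ (p:ℝ) := by exact_mod_cast hp1
  rcases le_or_gt len p with hcase|hcase
  · have : (len:ℝ) ≤ (p:ℝ) := by exact_mod_cast hcase
    nlinarith
  have hWLlen := WL_len N
  have hphi : i + len ≤ 2*(phiIter N).length := by omega
  have todd : ∀ t, t < len → Odd (i+t) → u.getD t false = true := by
    intro t ht hodd
    rw [hgetD t ht]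
    exact WL_odd' N (i+t) (by omega) hodd
  have teven : ∀ t k, t < len → i+t = 2*k → (u.getD t false = true ↔ zf (k+1) < bt) := by
    intro t k ht hk
    have hkL : k < (phiIter N).length := by omega
    rw [hgetD t ht, hk, WL, gM_even _ k hkL]
    exact bridge N k hkL
  rcases Nat.even_or_odd p with hpe|hpo
  · -- p even
    obtain ⟨q, hq⟩ := hpe
    have hqq : p = 2*q := by omega
    have hq1 : 1 ≤ q := by omega
    set k0 := (i+1)/2 with hk0
    set c := (i + len - p + 1)/2 - k0 with hc
    have hagree : ∀ s, s < c → (zf (k0+s+1) < bt ↔ zf (k0+s+q+1) < bt) := by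
      intro s hs
      have hA : i ≤ 2*(k0+s) := by omega
      have hB : 2*(k0+s) + p < i + len := by omega
      set t := 2*(k0+s) - i with htdef
      have ht1 : i + t = 2*(k0+s) := by omega
      have ht2 : t + p < len := by omega
      have heq := hperi t ht2
      have e1 := teven t (k0+s) (by omega) (by omega)
      have e2 := teven (t+p) (k0+s+q) (by omega) (by omega)
      rw [← e1, ← e2, heq]
    have hcore := core (q := q) (k0 := k0) (c := c) hq1 (by
      intro j hj1 hj2
      have hs : j - k0 - 1 < c := by omega
      have hthis := hagree (j-k0-1) hs
      rw [show k0+(j-k0-1)+1 = j by omega, show k0+(j-k0-1)+q+1 = j+q by omega] at hthis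
      exact hthis)
    have hlenle : len ≤ p + 2*c + 1 := by omega
    have hcR : (len:ℝ) ≤ (p:ℝ) + 2*(c:ℝ) + 1 := by exact_mod_cast hlenle
    have hpq : (p:ℝ) = 2*(q:ℝ) := by exact_mod_cast hqq
    have hexp : (2+ga)*(p:ℝ) = (p:ℝ) + 2*((1+ga)*(q:ℝ)) := by rw [hpq]; ring
    linarith
  · -- p odd
    have hle : len ≤ p + 2 := by
      by_contra hgt
      push_neg at hgt
      have h0 := hperi 0 (by omega)
      have h2 := hperi 2 (by omega)
      have hpmod : p % 2 = 1 := Nat.odd_iff.mp hpo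
      rcases Nat.even_or_odd i with hie|hio
      · have himod : i % 2 = 0 := Nat.even_iff.mp hie
        set k := i/2 with hkdef
        have hup0 : u.getD (0+p) false = true :=
          todd (0+p) (by omega) (Nat.odd_iff.mpr (by omega))
        have hup2 : u.getD (2+p) false = true :=
          todd (2+p) (by omega) (Nat.odd_iff.mpr (by omega))
        have hz1 : zf (k+1) < bt := (teven 0 k (by omega) (by omega)).mp (by rw [h0]; exact hup0)
        have hz2 : zf (k+2) < bt := by
          have := (teven 2 (k+1) (by omega) (by omega)).mp (by rw [h2]; exact hup2)
          rwa [show k+1+1 = k+2 by omega] at this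
        exact no11z (k+1) ⟨hz1, by rwa [show k+1+1 = k+2 by omega]⟩
      · have himod : i % 2 = 1 := Nat.odd_iff.mp hio
        set k := (i+p)/2 with hkdef
        have hu0 : u.getD 0 false = true := todd 0 (by omega) (Nat.odd_iff.mpr (by omega))
        have hu2 : u.getD 2 false = true := todd 2 (by omega) (Nat.odd_iff.mpr (by omega))
        have hz1 : zf (k+1) < bt :=
          (teven (0+p) k (by omega) (by omega)).mp (by rw [← h0]; exact hu0)
        have hz2 : zf (k+2) < bt := by
          have := (teven (2+p) (k+1) (by omega) (by omega)).mp (by rw [← h2]; exact hu2)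
          rwa [show k+1+1 = k+2 by omega] at this
        exact no11z (k+1) ⟨hz1, by rwa [show k+1+1 = k+2 by omega]⟩
    have : (len:ℝ) ≤ (p:ℝ) + 2 := by exact_mod_cast hle
    nlinarith

lemma drop_take_infix (l : List Bool) (a b : ℕ) : (l.drop a).take b <:+: l :=
  ⟨l.take a, (l.drop a).drop b, by rw [List.append_assoc, List.take_append_drop, List.take_append_drop]⟩

lemma seg_getD (l : List Bool) (a b t : ℕ) (ht : t < b) (hb : a + b ≤ l.length) :
    ((l.drop a).take b).getD t false = l.getD (a+t) false := by
  have h1 : t < ((l.drop a).take b).length := by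
    simp only [List.length_take, List.length_drop]
    omega
  have h2 : a + t < l.length := by omega
  rw [List.getD_eq_getElem _ _ h1, List.getD_eq_getElem _ _ h2]
  rw [List.getElem_take, List.getElem_drop]

set_option maxHeartbeats 2000000 in
theorem lower_main (n : ℕ) (hn : 4 ≤ n) (he : Even n) :
    ∃ u N, u <:+: WL N ∧ u.length = 2*(Nat.fib (n+2) - 2 + Nat.fib n) ∧
      HasPeriod u (2*Nat.fib n) := by
  set q := Nat.fib n with hqdef
  set c := Nat.fib (n+2) - 2 with hcdef
  set k0 := Nat.fib (n+1) + 1 with hk0def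
  have hq1 : 1 ≤ q := Nat.fib_pos.mpr (by omega)
  have hfib8 : 8 ≤ Nat.fib (n+2) := by
    calc 8 = Nat.fib 6 := by norm_num [Nat.fib]
    _ ≤ Nat.fib (n+2) := Nat.fib_mono (by omega)
  have hfadd : Nat.fib (n+3) = Nat.fib (n+1) + Nat.fib (n+2) := Nat.fib_add_two
  set N := k0 + c + q with hNdef
  have hphiL : k0 + c + q + 1 ≤ (phiIter N).length := phiIter_len N
  set L := (phiIter N).length with hLdef
  have hWLlen : (WL N).length = 2*L := WL_len N
  set u := ((WL N).drop (2*k0)).take (2*(c+q)) with hudef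
  have hulen : u.length = 2*(c+q) := by
    rw [hudef]
    simp only [List.length_take, List.length_drop]
    omega
  refine ⟨u, N, drop_take_infix _ _ _, by omega, ⟨by omega, ?_⟩⟩
  intro t ht
  rw [hulen] at ht
  have hget : ∀ t', t' < 2*(c+q) → u.getD t' false = (WL N).getD (2*k0+t') false := by
    intro t' ht'
    rw [hudef]
    exact seg_getD _ _ _ _ ht' (by omega)
  rw [hget t (by omega), hget (t+2*q) (by omega)]
  rcases Nat.even_or_odd t with hte|hto
  · -- t even : t = 2s
    obtain ⟨s, hs⟩ := hte
    have hseq : t = 2*s := by omega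
    have h1 : 2*k0 + t = 2*(k0+s) := by omega
    have h2 : 2*k0 + (t+2*q) = 2*(k0+s+q) := by omega
    have hsc : s < c := by omega
    have hkL1 : k0 + s < L := by omega
    have hkL2 : k0 + s + q < L := by omega
    rw [h1, h2, WL, gM_even _ _ hkL1, gM_even _ _ hkL2]
    apply bool_eq_of_iff
    rw [bridge N _ hkL1, bridge N _ hkL2]
    have hbic := lb_bicond hn he (j := k0+s+1) (by omega) (by omega)
    rw [show k0+s+1+Nat.fib n = k0+s+q+1 by omega] at hbic
    exact hbic
  · -- t odd
    obtain ⟨s, hs⟩ := hto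
    have h1 : 2*k0 + t = 2*(k0+s)+1 := by omega
    have h2 : 2*k0 + (t+2*q) = 2*(k0+s+q)+1 := by omega
    rw [h1, h2, WL, gM_odd _ _ (by omega), gM_odd _ _ (by omega)]

end


set_option maxHeartbeats 2000000

/-- w = g(φ^ω(0)) has no antisquare factors other than 01 and 10, and
its critical exponent (the supremum of exponents of its nonempty factors) equals
2 + (1+√5)/2. -/
theorem stmt_2 :
    (∀ u, WFactor u → Antisquare u → u = [false, true] ∨ u = [true, false]) ∧
    IsLUB {e : ℝ | ∃ u, WFactor u ∧ u ≠ [] ∧ e = exponent u}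
      (2 + (1 + Real.sqrt 5) / 2) := by
  have hga := ga_lb
  have hga2 := ga_ub
  constructor
  · -- antisquares
    rintro u ⟨n, hinf⟩ ⟨y, hy0, hyu⟩
    exact antisquare_main (N := n) hinf ⟨y, hy0, hyu⟩
  · -- critical exponent
    have hgoal : (2:ℝ) + (1 + Real.sqrt 5) / 2 = 2 + ga := rfl
    rw [hgoal]
    constructor
    · -- upper bound
      rintro e ⟨u, ⟨n, hinf⟩, hne, rfl⟩
      have hlenpos : 0 < u.length := List.length_pos_iff.mpr hne
      have hmemlen : HasPeriod u u.length := ⟨hlenpos, fun i hi => absurd hi (by omega)⟩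
      have hne' : {p : ℕ | HasPeriod u p}.Nonempty := ⟨u.length, hmemlen⟩
      have hp0mem : sInf {p : ℕ | HasPeriod u p} ∈ {p : ℕ | HasPeriod u p} := Nat.sInf_mem hne'
      set p0 := sInf {p : ℕ | HasPeriod u p} with hp0
      have hp01 : 1 ≤ p0 := hp0mem.1
      have hub := upper_main (N := n) hinf hp0mem
      rw [exponent, ← hp0]
      rw [div_le_iff₀ (by exact_mod_cast hp01 : (0:ℝ) < (p0:ℝ))]
      linarith [hub]
    · -- least upper bound
      rintro b hb
      by_contra hlt
      push_neg at hlt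
      set ε := 2 + ga - b with hε
      have hε0 : 0 < ε := by linarith
      obtain ⟨M0, hM0⟩ := exists_nat_gt (2/ε)
      set n := 2*(M0 + 3) with hn
      have hn6 : 6 ≤ n := by omega
      have hne : Even n := ⟨M0+3, by omega⟩
      obtain ⟨u, N, hinf, hulen, hper⟩ := lower_main n (by omega) hne
      set q := Nat.fib n with hq
      have hq1 : 1 ≤ q := Nat.fib_pos.mpr (by omega)
      have hqn : n ≤ q := Nat.le_fib_self (by omega)
      have hfib8 : 8 ≤ Nat.fib (n+2) := by
        calc 8 = Nat.fib 6 := by norm_num [Nat.fib]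
        _ ≤ Nat.fib (n+2) := Nat.fib_mono (by omega)
      have hlenpos : 0 < u.length := by omega
      have hne'' : u ≠ [] := by
        intro hc
        rw [hc] at hlenpos
        simp at hlenpos
      have hmemS : exponent u ∈ {e : ℝ | ∃ u, WFactor u ∧ u ≠ [] ∧ e = exponent u} :=
        ⟨u, ⟨N, hinf⟩, hne'', rfl⟩
      have hble := hb hmemS
      -- exponent u ≥ len/(2q)
      have hne' : {p : ℕ | HasPeriod u p}.Nonempty := ⟨2*q, hper⟩
      have hp0mem : sInf {p : ℕ | HasPeriod u p} ∈ {p : ℕ | HasPeriod u p} := Nat.sInf_mem hne'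
      set p0 := sInf {p : ℕ | HasPeriod u p} with hp0
      have hp01 : 1 ≤ p0 := hp0mem.1
      have hp0le : p0 ≤ 2*q := Nat.sInf_le hper
      have hexp_ge : ((u.length:ℝ))/(2*(q:ℝ)) ≤ exponent u := by
        rw [exponent, ← hp0]
        apply div_le_div_of_nonneg_left (by positivity) (by exact_mod_cast hp01)
        exact_mod_cast hp0le
      -- len/(2q) ≥ 2 + ga - 2/q
      have hfibid : ((Nat.fib (n+2):ℕ):ℝ) = (1+ga)*(q:ℝ) + et n := by
        have h1 := fib_ga n
        rw [one_sub_ga_pow_even hne] at h1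
        have h2 : (Nat.fib (n+2) : ℝ) = (Nat.fib n : ℝ) + (Nat.fib (n+1) : ℝ) := by
          rw [Nat.fib_add_two]; push_cast; ring
        rw [hq]
        push_cast
        push_cast at h1 h2
        nlinarith
      have hlenR : (u.length:ℝ) = 2*((Nat.fib (n+2):ℝ) - 2 + (q:ℝ)) := by
        rw [hulen]
        have : (2:ℕ) ≤ Nat.fib (n+2) := by omega
        push_cast [Nat.cast_sub this]
        ring
      have hqR : (0:ℝ) < (q:ℝ) := by exact_mod_cast hq1
      have hlb : 2 + ga - 2/(q:ℝ) ≤ ((u.length:ℝ))/(2*(q:ℝ)) := by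
        rw [hlenR, hfibid, le_div_iff₀ (by positivity : (0:ℝ) < 2*(q:ℝ))]
        have hdq : (2/(q:ℝ))*(q:ℝ) = 2 := by field_simp
        nlinarith [et_pos n]
      have h2q : 2/(q:ℝ) < ε := by
        rw [div_lt_iff₀ hqR]
        have hnq : (n:ℝ) ≤ (q:ℝ) := by exact_mod_cast hqn
        have hM0n : (M0:ℝ) < (n:ℝ) := by exact_mod_cast (by omega : M0 < n)
        have h2e : 2/ε < (M0:ℝ) := hM0
        rw [div_lt_iff₀ hε0] at h2e
        nlinarith
      linarith [hexp_ge, hlb, hble]
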